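/- Let φ be the morphism on {0,1} defined by φ(0) = 011001 and φ(1) = 001011, let u be any infinite binary sequence, and let v = φ(u). Then v has no palindromic factor of length k for any k ≥ 8; that is, pal_v(k) = 0 for all k ≥ 8. -/
import Mathlib


namespace PalPaper

variable {α : Type*}

/-- The finite word `u i, u (i+1), …, u (i+k-1)` read off the infinite sequence `u`. -/
def factorAt (u : ℕ → α) (i k : ℕ) : List α :=
  (List.range k).map fun j => u (i + j)

/-- `w` occurs as a contiguous block (factor) in the infinite sequence `u`. -/
def IsFactor (u : ℕ → α) (w : List α) : Prop :=
  ∃ i, w = factorAt u i w.length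

/-- A palindrome is a word equal to its reversal. -/
def IsPalindrome (w : List α) : Prop := w.reverse = w

/-- Number of distinct factors of length `k` of `u`. -/
noncomputable def facComplexity (u : ℕ → α) (k : ℕ) : ℕ :=
  Set.ncard {w : List α | w.length = k ∧ IsFactor u w}

/-- Number of distinct palindromic factors of length `k` of `u`. -/
noncomputable def palComplexity (u : ℕ → α) (k : ℕ) : ℕ :=
  Set.ncard {w : List α | w.length = k ∧ IsFactor u w ∧ IsPalindrome w}

/-- `p ≥ 1` is a period of the finite word `w`. -/
def IsPeriodOf (p : ℕ) (w : List α) : Prop :=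
  1 ≤ p ∧ ∀ i (h : i + p < w.length), w[i]'(by omega) = w[i + p]'h

/-- The minimal period of a finite word. -/
noncomputable def minPeriod (w : List α) : ℕ := sInf {p | IsPeriodOf p w}

/-- The prefix of length `m` of the infinite sequence `u`, as a finite word. -/
def seqPrefix (u : ℕ → α) (m : ℕ) : List α := (List.range m).map u

/-- The word `σ(u 0) σ(u 1) ⋯ σ(u (n-1))`. -/
def substPrefix (σ : α → List α) (u : ℕ → α) (n : ℕ) : List α :=
  (List.range n).flatMap fun i => σ (u i)

/-- `v = σ(u)`: every word `σ(u 0) ⋯ σ(u (n-1))` is the corresponding prefix of `v`. -/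
def IsMorphicImage (σ : α → List α) (u v : ℕ → α) : Prop :=
  ∀ n, substPrefix σ u n = seqPrefix v (substPrefix σ u n).length

/-- `u` is a fixed point of the morphism `σ`, i.e. `σ(u) = u`. -/
def IsFixedPointOf (σ : α → List α) (u : ℕ → α) : Prop := IsMorphicImage σ u u

/-- The `k`-th iterate of a morphism, applied to a letter. -/
def morphIter (σ : α → List α) : ℕ → α → List α
  | 0, a => [a]
  | k + 1, a => (σ a).flatMap (morphIter σ k)

/-- A morphism is primitive if some iterate maps every letter to a word
containing every letter. -/
def IsPrimitive (σ : α → List α) : Prop :=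
  ∃ k, 1 ≤ k ∧ ∀ a b : α, b ∈ morphIter σ k a

-- AUX START
lemma factorAt_length (u : ℕ → α) (i k : ℕ) : (factorAt u i k).length = k := by
  simp [factorAt]

lemma factorAt_getElem (u : ℕ → α) {i k j : ℕ} (h : j < k) :
    (factorAt u i k)[j]'(by rw [factorAt_length]; exact h) = u (i + j) := by
  simp [factorAt]

lemma pal_iff (w : List α) : IsPalindrome w ↔
    ∀ t (h : t < w.length), w[t] = w[w.length - 1 - t]'(by omega) := by
  constructor
  · intro hp t ht
    have h2 : w.reverse[t]? = w[t]? := by rw [hp]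
    rw [List.getElem?_eq_getElem (by simpa using ht),
        List.getElem?_eq_getElem ht, List.getElem_reverse] at h2
    exact (Option.some.inj h2).symm
  · intro h
    apply List.ext_getElem (by simp)
    intro n h1 h2
    rw [List.getElem_reverse]
    exact (h n h2).symm

lemma substPrefix_succ (σ : α → List α) (u : ℕ → α) (n : ℕ) :
    substPrefix σ u (n + 1) = substPrefix σ u n ++ σ (u n) := by
  simp [substPrefix, List.range_succ]

section Main

variable (φ : Fin 2 → List (Fin 2))
    (hφ0 : φ 0 = [0, 1, 1, 0, 0, 1]) (hφ1 : φ 1 = [0, 0, 1, 0, 1, 1])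
    (u v : ℕ → Fin 2) (hv : IsMorphicImage φ u v)

include hφ0 hφ1

lemma philen : ∀ a : Fin 2, (φ a).length = 6 := by
  have htwo : ∀ x : Fin 2, x = 0 ∨ x = 1 := by decide
  intro a; rcases htwo a with rfl | rfl <;> simp [hφ0, hφ1]

lemma substPrefix_length : ∀ n, (substPrefix φ u n).length = 6 * n := by
  intro n
  induction n with
  | zero => simp [substPrefix]
  | succ n ih => rw [substPrefix_succ, List.length_append, ih, philen φ hφ0 hφ1]; ring

lemma check_decide : ∀ a b c : Fin 2, ∀ r : Fin 6, ∀ k : Fin 2,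
    ¬ ((((φ a ++ (φ b ++ φ c)).drop r.val).take (8 + k.val)).reverse
      = (((φ a ++ (φ b ++ φ c)).drop r.val).take (8 + k.val))) := by
  have htwo : ∀ x : Fin 2, x = 0 ∨ x = 1 := by decide
  intro a b c
  rcases htwo a with rfl | rfl <;> rcases htwo b with rfl | rfl <;>
    rcases htwo c with rfl | rfl <;> simp only [hφ0, hφ1] <;> decide

include hv

lemma v_value (q r : ℕ) (hr : r < 6) :
    v (6 * q + r) = (φ (u q))[r]'(by rw [philen φ hφ0 hφ1]; exact hr) := by
  have h := hv (q + 1)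
  have h2 : (substPrefix φ u (q+1))[6*q+r]? =
      (seqPrefix v (substPrefix φ u (q+1)).length)[6*q+r]? := by rw [← h]
  rw [substPrefix_length φ hφ0 hφ1] at h2
  rw [substPrefix_succ] at h2
  rw [List.getElem?_append_right (by rw [substPrefix_length φ hφ0 hφ1]; omega)] at h2
  rw [substPrefix_length φ hφ0 hφ1, Nat.add_sub_cancel_left] at h2
  rw [List.getElem?_eq_getElem (by rw [philen φ hφ0 hφ1]; exact hr)] at h2
  rw [List.getElem?_eq_getElem (by simp [seqPrefix]; omega)] at h2
  simp only [seqPrefix, List.getElem_map, List.getElem_range] at h2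
  exact (Option.some.inj h2).symm

lemma v_block (i j : ℕ) (hj : i % 6 + j < 18) :
    v (i + j) = (φ (u (i / 6)) ++ (φ (u (i / 6 + 1)) ++ φ (u (i / 6 + 2))))[i % 6 + j]'(by
      simp [philen φ hφ0 hφ1]; omega) := by
  set q := i / 6 with hq
  set r := i % 6 with hr
  have hi : i = 6 * q + r := (Nat.div_add_mod i 6).symm
  have hr6 : r < 6 := Nat.mod_lt _ (by norm_num)
  have hA : (φ (u q)).length = 6 := philen φ hφ0 hφ1 _
  have hB : (φ (u (q+1))).length = 6 := philen φ hφ0 hφ1 _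
  rcases lt_or_ge (r + j) 6 with h6 | h6
  · rw [List.getElem_append_left (by omega)]
    have e : i + j = 6 * q + (r + j) := by omega
    rw [e, v_value φ hφ0 hφ1 u v hv q (r+j) h6]
  · rw [List.getElem_append_right (by omega)]
    rcases lt_or_ge (r + j) 12 with h12 | h12
    · rw [List.getElem_append_left (by omega)]
      have e : i + j = 6 * (q+1) + (r + j - 6) := by omega
      rw [e, v_value φ hφ0 hφ1 u v hv (q+1) (r+j-6) (by omega)]
      congr 1; omega
    · rw [List.getElem_append_right (by omega)]
      have e : i + j = 6 * (q+2) + (r + j - 12) := by omega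
      rw [e, v_value φ hφ0 hφ1 u v hv (q+2) (r+j-12) (by omega)]
      congr 1; omega

lemma factor_slice (i k : ℕ) (hk : k ≤ 12) :
    factorAt v i k =
      ((φ (u (i / 6)) ++ (φ (u (i / 6 + 1)) ++ φ (u (i / 6 + 2)))).drop (i % 6)).take k := by
  have hr6 : i % 6 < 6 := Nat.mod_lt _ (by norm_num)
  have hlen : ((φ (u (i / 6)) ++ (φ (u (i / 6 + 1)) ++ φ (u (i / 6 + 2)))).length) = 18 := by
    simp [philen φ hφ0 hφ1]
  apply List.ext_getElem
  · rw [factorAt_length, List.length_take, List.length_drop, hlen]; omega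
  · intro n h1 h2
    rw [factorAt_length] at h1
    rw [factorAt_getElem _ h1, List.getElem_take, List.getElem_drop]
    exact v_block φ hφ0 hφ1 u v hv i n (by omega)

lemma no_pal89 (i k : ℕ) (hk : k = 8 ∨ k = 9) : ¬ IsPalindrome (factorAt v i k) := by
  rw [factor_slice φ hφ0 hφ1 u v hv i k (by omega), IsPalindrome]
  have h := check_decide φ hφ0 hφ1 (u (i/6)) (u (i/6+1)) (u (i/6+2))
    ⟨i % 6, Nat.mod_lt _ (by norm_num)⟩ ⟨k - 8, by omega⟩
  rcases hk with h8 | h9 <;> subst_vars <;> simpa using h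

omit hφ0 hφ1 hv in
lemma descent (i k : ℕ) (hk : 2 ≤ k) (h : IsPalindrome (factorAt v i k)) :
    IsPalindrome (factorAt v (i + 1) (k - 2)) := by
  rw [pal_iff] at h ⊢
  simp only [factorAt_length] at h ⊢
  intro t ht
  rw [factorAt_getElem _ ht, factorAt_getElem _ (by omega : k - 2 - 1 - t < k - 2)]
  have h1 := h (1 + t) (by omega)
  rw [factorAt_getElem _ (by omega : 1 + t < k),
      factorAt_getElem _ (by omega : k - 1 - (1 + t) < k)] at h1
  have e1 : i + 1 + t = i + (1 + t) := by omega
  have e2 : i + 1 + (k - 2 - 1 - t) = i + (k - 1 - (1 + t)) := by omega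
  rw [e1, e2, h1]

lemma no_pal : ∀ k, 8 ≤ k → ∀ i, ¬ IsPalindrome (factorAt v i k) := by
  intro k
  induction k using Nat.strong_induction_on with
  | _ k ih =>
    intro hk i hp
    rcases lt_or_ge k 10 with h10 | h10
    · exact no_pal89 φ hφ0 hφ1 u v hv i k (by omega) hp
    · exact ih (k - 2) (by omega) (by omega) (i + 1) (descent v i k (by omega) hp)

end Main
-- AUX END

/-- The image of any binary sequence under the morphism `0 → 011001`,
`1 → 001011` has no palindromic factor of length `k ≥ 8`. -/
theorem stmt19 (φ : Fin 2 → List (Fin 2))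
    (hφ0 : φ 0 = [0, 1, 1, 0, 0, 1]) (hφ1 : φ 1 = [0, 0, 1, 0, 1, 1])
    (u v : ℕ → Fin 2) (hv : IsMorphicImage φ u v) :
    ∀ k, 8 ≤ k → palComplexity v k = 0 := by
  intro k hk
  have hset : {w : List (Fin 2) | w.length = k ∧ IsFactor v w ∧ IsPalindrome w} = ∅ := by
    ext w
    simp only [Set.mem_setOf_eq, Set.mem_empty_iff_false, iff_false, not_and]
    rintro hlen ⟨i, hi⟩ hpal
    rw [hlen] at hi
    subst hi
    exact no_pal φ hφ0 hφ1 u v hv k hk i hpal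
  rw [palComplexity, hset, Set.ncard_empty]

end PalPaper
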